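/- Let L, R, D be nonnegative reals with L + R + D > 0, and let s be a complex number with Re s > 0. Then the admittance ρ = s / (L s² + R s + D) satisfies |ρ| ≤ (|s| / Re s) · Re ρ. -/

import Mathlib

open Complex

theorem admittance_modulus_estimate (L R D : ℝ) (hL : 0 ≤ L) (hR : 0 ≤ R) (hD : 0 ≤ D)
    (hsum : 0 < L + R + D) (s : ℂ) (hs : 0 < s.re) :
    ‖s / ((L : ℂ) * s ^ 2 + (R : ℂ) * s + (D : ℂ))‖
      ≤ (‖s‖ / s.re) * (s / ((L : ℂ) * s ^ 2 + (R : ℂ) * s + (D : ℂ))).re := by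
  set Z : ℂ := (L : ℂ) * s ^ 2 + (R : ℂ) * s + (D : ℂ) with hZdef
  by_cases hZ : Z = 0
  · simp [hZ]
  have habsZ : 0 < ‖Z‖ := norm_pos_iff.mpr hZ
  have habs : 0 < ‖s‖ :=
    norm_pos_iff.mpr (fun h => by simp [h] at hs)
  have hre_le : s.re ≤ ‖s‖ := Complex.re_le_norm s
  -- key: Re(s * conj Z)
  have hN : (s * (starRingEnd ℂ) Z).re
      = L * Complex.normSq s * s.re + R * Complex.normSq s + D * s.re := by
    simp [hZdef, Complex.normSq_apply, Complex.mul_re, Complex.mul_im, pow_two]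
    ring
  have hsq : Complex.normSq s = ‖s‖ * ‖s‖ := by
    rw [Complex.normSq_eq_norm_sq]; ring
  -- triangle inequality bound on |Z|
  have hZle : ‖Z‖ ≤ L * (‖s‖)^2 + R * ‖s‖ + D := by
    calc ‖Z‖ ≤ ‖(L : ℂ) * s ^ 2 + (R : ℂ) * s‖ + ‖(D : ℂ)‖ :=
          norm_add_le _ _
      _ ≤ ‖(L : ℂ) * s ^ 2‖ + ‖(R : ℂ) * s‖ + ‖(D : ℂ)‖ := by
          gcongr; exact norm_add_le _ _
      _ = L * (‖s‖)^2 + R * ‖s‖ + D := by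
          simp [norm_mul, norm_pow, Complex.norm_real, Real.norm_eq_abs, abs_of_nonneg hL,
            abs_of_nonneg hR, abs_of_nonneg hD]
  have hkey : s.re * ‖Z‖ ≤ (s * (starRingEnd ℂ) Z).re := by
    rw [hN, hsq]
    have h1 : s.re * ‖Z‖
        ≤ s.re * (L * (‖s‖)^2 + R * ‖s‖ + D) := by
      exact mul_le_mul_of_nonneg_left hZle hs.le
    refine h1.trans ?_
    have h2 : R * ‖s‖ * s.re ≤ R * ‖s‖ * ‖s‖ := by
      exact mul_le_mul_of_nonneg_left hre_le (by positivity)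
    nlinarith
  have hreZ : (s / Z).re = (s * (starRingEnd ℂ) Z).re / Complex.normSq Z := by
    rw [Complex.div_re, Complex.mul_re]
    simp [Complex.conj_re, Complex.conj_im, add_div, mul_comm, mul_div_assoc]
  rw [norm_div, hreZ]
  have hnsZ : Complex.normSq Z = ‖Z‖ * ‖Z‖ := by
    rw [Complex.normSq_eq_norm_sq]; ring
  rw [hnsZ]
  have heq : ‖s‖ / s.re * ((s * (starRingEnd ℂ) Z).re / (‖Z‖ * ‖Z‖))
      = ‖s‖ * (s * (starRingEnd ℂ) Z).re / (s.re * (‖Z‖ * ‖Z‖)) := by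
    field_simp
  rw [heq, div_le_div_iff₀ habsZ (by positivity)]
  nlinarith [mul_le_mul_of_nonneg_left hkey habs.le]
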